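/- arXiv:0911.4331 — 8 statements merged into one kernel-verified Lean document; each statement's English description precedes it below -/
import Mathlib

section
/- Let x, y, α ∈ ℂ with x ≠ 0, and let U ⊂ ℂ be a disc centred at 0. Let D : U → ℂ be analytic with D(0) = 0 such that 1 + yw ≠ 0 and 1 + D(w) ≠ 0 on U and 1 + D(w) = (1 + yw)·exp(α·D(w)) for all w ∈ U. Let B : U → ℂ be analytic with B(0) = 0 and B'(w) = x·y·(1 + D(w))/(1 + yw) for all w ∈ U. Then for all w ∈ U, B(w) = x·( D(w) − α·D(w)·(1 + D(w)/2) ). -/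
/-- Closed-form integration for the root-degree generating function of rooted
2-connected series-parallel graphs. -/
theorem stmt_3 (x y α : ℂ) (hx : x ≠ 0) (r : ℝ) (hr : 0 < r)
    (D B : ℂ → ℂ)
    (hD : AnalyticOnNhd ℂ D (Metric.ball (0:ℂ) r)) (hD0 : D 0 = 0)
    (hy : ∀ w ∈ Metric.ball (0:ℂ) r, 1 + y * w ≠ 0)
    (hDne : ∀ w ∈ Metric.ball (0:ℂ) r, 1 + D w ≠ 0)
    (heq : ∀ w ∈ Metric.ball (0:ℂ) r, 1 + D w = (1 + y * w) * Complex.exp (α * D w))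
    (hB : AnalyticOnNhd ℂ B (Metric.ball (0:ℂ) r)) (hB0 : B 0 = 0)
    (hB' : ∀ w ∈ Metric.ball (0:ℂ) r, deriv B w = x * y * (1 + D w) / (1 + y * w)) :
    ∀ w ∈ Metric.ball (0:ℂ) r, B w = x * (D w - α * D w * (1 + D w / 2)) := by
  set s := Metric.ball (0:ℂ) r with hsdef
  have hs : IsOpen s := Metric.isOpen_ball
  have h0 : (0:ℂ) ∈ s := Metric.mem_ball_self hr
  set g : ℂ → ℂ := fun w => B w - x * (D w - α * D w * (1 + D w / 2)) with hg
  have key : ∀ z ∈ s, HasDerivAt g 0 z := by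
    intro z hz
    have hDz : HasDerivAt D (deriv D z) z := (hD z hz).differentiableAt.hasDerivAt
    have hBz : HasDerivAt B (deriv B z) z := (hB z hz).differentiableAt.hasDerivAt
    have h1 : HasDerivAt (fun w => 1 + D w) (deriv D z) z := hDz.const_add 1
    have hexp : HasDerivAt (fun w => Complex.exp (α * D w))
        (α * deriv D z * Complex.exp (α * D z)) z := by
      have := (hDz.const_mul α).cexp
      convert this using 1
      · rfl
      ring
    have hlin : HasDerivAt (fun w : ℂ => 1 + y * w) y z := by
      simpa using ((hasDerivAt_id z).const_mul y).const_add (1 : ℂ)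
    have h2 : HasDerivAt (fun w => (1 + y * w) * Complex.exp (α * D w))
        (y * Complex.exp (α * D z) + (1 + y * z) * (α * deriv D z * Complex.exp (α * D z))) z := by
      exact hlin.mul hexp
    have h12 : HasDerivAt (fun w => 1 + D w)
        (y * Complex.exp (α * D z) + (1 + y * z) * (α * deriv D z * Complex.exp (α * D z))) z := by
      refine h2.congr_of_eventuallyEq ?_
      filter_upwards [hs.mem_nhds hz] with u hu
      exact heq u hu
    have hder : deriv D z
        = y * Complex.exp (α * D z) + (1 + y * z) * (α * deriv D z * Complex.exp (α * D z)) :=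
      h1.unique h12
    have hexpval : (1 + y * z) * Complex.exp (α * D z) = 1 + D z := (heq z hz).symm
    -- derivative of the closed form
    have hrhs : HasDerivAt (fun w => x * (D w - α * D w * (1 + D w / 2)))
        (x * (deriv D z - α * (deriv D z * (1 + D z / 2) + D z * (deriv D z / 2)))) z := by
      have h3 : HasDerivAt (fun w => D w - α * D w * (1 + D w / 2))
          (deriv D z - α * (deriv D z * (1 + D z / 2) + D z * (deriv D z / 2))) z := by
        have h4 : HasDerivAt (fun w => α * D w * (1 + D w / 2))
            (α * (deriv D z * (1 + D z / 2) + D z * (deriv D z / 2))) z := by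
          have h5 : HasDerivAt (fun w => D w * (1 + D w / 2))
              (deriv D z * (1 + D z / 2) + D z * (deriv D z / 2)) z := by
            exact hDz.mul ((hDz.div_const 2).const_add 1)
          simpa [mul_assoc] using h5.const_mul α
        exact hDz.sub h4
      exact h3.const_mul x
    have hgz : HasDerivAt g
        (deriv B z - x * (deriv D z - α * (deriv D z * (1 + D z / 2) + D z * (deriv D z / 2)))) z :=
      hBz.sub hrhs
    have hzero : deriv B z
        - x * (deriv D z - α * (deriv D z * (1 + D z / 2) + D z * (deriv D z / 2))) = 0 := by
      rw [hB' z hz]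
      have hyz := hy z hz
      have h6' : deriv D z * (1 + y * z)
          = y * (1 + D z) + α * deriv D z * (1 + D z) * (1 + y * z) := by
        linear_combination (1 + y * z) * hder + (y + (1 + y * z) * α * deriv D z) * hexpval
      field_simp
      linear_combination (-2 * x) * h6'
    rw [hzero] at hgz
    exact hgz
  intro w hw
  have hconv : Convex ℝ s := convex_ball 0 r
  have hdiff : DifferentiableOn ℂ g s := fun z hz =>
    ((key z hz).differentiableAt).differentiableWithinAt
  have hfd : ∀ z ∈ s, fderivWithin ℂ g s z = 0 := by
    intro z hz
    have h := ((key z hz).hasFDerivAt).fderiv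
    rw [fderivWithin_of_isOpen hs hz, h]
    ext v
    simp
  have := hconv.is_const_of_fderivWithin_eq_zero hdiff hfd hw h0
  have hg0 : g 0 = 0 := by simp [hg, hB0, hD0]
  have : g w = 0 := this.trans hg0
  have := sub_eq_zero.mp this
  simpa [hg] using this
end

section
/- Let y > 0 and suppose R > 0 and E₀ > 0 satisfy Φ(R,y,E₀) = 0 and Φ_z(R,y,E₀) = 0, where Φ(x,y,z) = (1+y)·exp( x z² / (1 + x z) ) − z − 1 and Φ_z is the partial derivative in z. Then R·E₀ = √(1 + 1/E₀) − 1, i.e. R = (√(1 + 1/E₀) − 1)/E₀, and ( log((1+E₀)/(1+y)) − E₀ )² = E₀³/(E₀ + 1). -/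
/-- Explicit relations for the singularity `R` and singular value `E₀` of the
series-parallel network generating function, determined by the characteristic
system `Φ = 0`, `Φ_z = 0`. -/
theorem stmt_4 (y R E₀ : ℝ) (hy : 0 < y) (hR : 0 < R) (hE : 0 < E₀)
    (Φ : ℝ → ℝ → ℝ → ℝ)
    (hΦ : ∀ x y' z, Φ x y' z = (1 + y') * Real.exp (x * z ^ 2 / (1 + x * z)) - z - 1)
    (h1 : Φ R y E₀ = 0)
    (h2 : deriv (fun z => Φ R y z) E₀ = 0) :
    R * E₀ = Real.sqrt (1 + 1 / E₀) - 1 ∧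
    R = (Real.sqrt (1 + 1 / E₀) - 1) / E₀ ∧
    (Real.log ((1 + E₀) / (1 + y)) - E₀) ^ 2 = E₀ ^ 3 / (E₀ + 1) := by
  have ht0 : 0 < R * E₀ := mul_pos hR hE
  set t := R * E₀ with ht
  have hden : (0:ℝ) < 1 + t := by linarith
  have hdne : (1 + t) ≠ 0 := ne_of_gt hden
  simp only [hΦ] at h1 h2
  -- derivative computation
  have hN : HasDerivAt (fun z : ℝ => R * z ^ 2) (R * (2 * E₀)) E₀ := by
    have := (hasDerivAt_pow 2 E₀).const_mul R
    simpa [mul_comm, mul_assoc, mul_left_comm] using this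
  have hD : HasDerivAt (fun z : ℝ => 1 + R * z) R E₀ := by
    simpa using ((hasDerivAt_id E₀).const_mul R).const_add 1
  have hDval : 1 + R * E₀ = 1 + t := rfl
  have hu : HasDerivAt (fun z : ℝ => R * z ^ 2 / (1 + R * z))
      ((R * (2 * E₀) * (1 + t) - R * E₀ ^ 2 * R) / (1 + t) ^ 2) E₀ := by
    have := hN.div hD (by rw [hDval]; exact hdne)
    exact this
  have hf : HasDerivAt (fun z : ℝ => (1 + y) * Real.exp (R * z ^ 2 / (1 + R * z)) - z - 1)
      ((1 + y) * (Real.exp (R * E₀ ^ 2 / (1 + R * E₀)) *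
        ((R * (2 * E₀) * (1 + t) - R * E₀ ^ 2 * R) / (1 + t) ^ 2)) - 1) E₀ := by
    simpa using (((hu.exp).const_mul (1 + y)).sub (hasDerivAt_id E₀)).sub_const 1
  have h2' : (1 + y) * (Real.exp (R * E₀ ^ 2 / (1 + R * E₀)) *
        ((R * (2 * E₀) * (1 + t) - R * E₀ ^ 2 * R) / (1 + t) ^ 2)) - 1 = 0 := by
    rw [← hf.deriv]; exact h2
  have hexp : (1 + y) * Real.exp (R * E₀ ^ 2 / (1 + R * E₀)) = 1 + E₀ := by linarith
  have hnum : R * (2 * E₀) * (1 + t) - R * E₀ ^ 2 * R = t ^ 2 + 2 * t := by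
    rw [ht]; ring
  have h2'' : (1 + E₀) * ((t ^ 2 + 2 * t) / (1 + t) ^ 2) = 1 := by
    rw [← hnum]
    calc (1 + E₀) * ((R * (2 * E₀) * (1 + t) - R * E₀ ^ 2 * R) / (1 + t) ^ 2)
        = (1 + y) * (Real.exp (R * E₀ ^ 2 / (1 + R * E₀)) *
            ((R * (2 * E₀) * (1 + t) - R * E₀ ^ 2 * R) / (1 + t) ^ 2)) := by
          rw [← hexp]; ring
      _ = 1 := by linarith
  have hchar : (1 + E₀) * (t ^ 2 + 2 * t) = (1 + t) ^ 2 := by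
    field_simp at h2''
    linarith
  have hkey : (1 + t) ^ 2 = 1 + 1 / E₀ := by
    have hE' : E₀ ≠ 0 := ne_of_gt hE
    field_simp
    nlinarith [hchar]
  have hsqrt : Real.sqrt (1 + 1 / E₀) = 1 + t := by
    rw [← hkey, Real.sqrt_sq hden.le]
  have g1 : t = Real.sqrt (1 + 1 / E₀) - 1 := by rw [hsqrt]; ring
  refine ⟨g1, ?_, ?_⟩
  · rw [eq_div_iff (ne_of_gt hE)]; exact g1
  · have hy' : (0:ℝ) < 1 + y := by linarith
    have hEe : (1 + E₀) / (1 + y) = Real.exp (R * E₀ ^ 2 / (1 + R * E₀)) := by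
      rw [div_eq_iff (ne_of_gt hy')]
      linarith [hexp]
    have hlog : Real.log ((1 + E₀) / (1 + y)) = t * E₀ / (1 + t) := by
      rw [hEe, Real.log_exp, hDval, ht]; ring_nf
    rw [hlog]
    have hE' : E₀ ≠ 0 := ne_of_gt hE
    have hE1 : E₀ + 1 ≠ 0 := by positivity
    field_simp
    nlinarith [hkey, sq_nonneg (1 + t), hE.le, ht0.le]
end

section
/- Let y ∈ ℂ \ {0} and let s > 0 be real; set κ = s/(1+s) and define Ψ(w,z) = (1 + y w)·exp(κ z) − z − 1. Then the point (w₀, z₀) with z₀ = 1/s and w₀ = ( (1 + 1/s)·exp(−1/(1+s)) − 1 )/y satisfies both Ψ(w₀, z₀) = 0 and Ψ_z(w₀, z₀) = 0, where Ψ_z is the partial derivative in z. -/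
/-- Explicit solution of the characteristic system `Ψ = 0`, `Ψ_z = 0` for the
singular coefficient `D₀` in the analysis of 2-connected series-parallel graphs. -/
theorem stmt_6 (y : ℂ) (hy : y ≠ 0) (s : ℝ) (hs : 0 < s)
    (κ : ℂ) (hκ : κ = (s : ℂ) / (1 + s))
    (Ψ : ℂ → ℂ → ℂ)
    (hΨ : ∀ w z, Ψ w z = (1 + y * w) * Complex.exp (κ * z) - z - 1)
    (w₀ z₀ : ℂ)
    (hz₀ : z₀ = 1 / (s : ℂ))
    (hw₀ : w₀ = ((1 + 1 / (s : ℂ)) * Complex.exp (-1 / (1 + (s : ℂ))) - 1) / y) :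
    Ψ w₀ z₀ = 0 ∧ deriv (fun z => Ψ w₀ z) z₀ = 0 := by
  have hs0 : (s : ℂ) ≠ 0 := by
    exact_mod_cast hs.ne'
  have hs1 : (1 + (s : ℂ)) ≠ 0 := by
    have : ((1 + s : ℝ) : ℂ) ≠ 0 := by
      exact_mod_cast (by linarith : (0:ℝ) < 1 + s).ne'
    simpa using this
  have hA : 1 + y * w₀ = (1 + 1 / (s : ℂ)) * Complex.exp (-1 / (1 + (s : ℂ))) := by
    rw [hw₀]
    field_simp
    ring
  have hκz : κ * z₀ = 1 / (1 + (s : ℂ)) := by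
    rw [hκ, hz₀]
    field_simp
  have hexp : Complex.exp (-1 / (1 + (s : ℂ))) * Complex.exp (κ * z₀) = 1 := by
    rw [← Complex.exp_add, hκz]
    rw [show (-1 / (1 + (s:ℂ)) + 1 / (1 + (s:ℂ))) = 0 by ring, Complex.exp_zero]
  constructor
  · rw [hΨ, hA]
    rw [mul_assoc, hexp, mul_one, hz₀]
    field_simp
    ring
  · have hd : HasDerivAt (fun z => Ψ w₀ z)
        ((1 + y * w₀) * (Complex.exp (κ * z₀) * κ) - 1) z₀ := by
      have h1 : HasDerivAt (fun z : ℂ => (1 + y * w₀) * Complex.exp (κ * z))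
          ((1 + y * w₀) * (Complex.exp (κ * z₀) * κ)) z₀ := by
        have := (Complex.hasDerivAt_exp (κ * z₀)).comp z₀
          ((hasDerivAt_id z₀).const_mul κ)
        simpa [mul_comm] using this.const_mul (1 + y * w₀)
      have h2 := (h1.sub (hasDerivAt_id z₀)).sub_const 1
      simp only [hΨ]
      simpa using h2
    rw [hd.deriv, hA]
    have : (1 + 1 / (s:ℂ)) * (Complex.exp (-1/(1+(s:ℂ))) * Complex.exp (κ * z₀)) * κ
        - 1 = 0 := by
      rw [hexp, hκ]
      field_simp
      ring
    calc (1 + 1 / (s:ℂ)) * Complex.exp (-1/(1+(s:ℂ))) * (Complex.exp (κ * z₀) * κ) - 1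
        = (1 + 1 / (s:ℂ)) * (Complex.exp (-1/(1+(s:ℂ))) * Complex.exp (κ * z₀)) * κ - 1 := by ring
      _ = 0 := this
end

section
/- Let R, S, W ∈ ℂ with S+1 ≠ 0, R+1 ≠ 0, 1+R+S ≠ 0 and SW+(R+1)² ≠ 0. Set X = R/(S+1)², Y = S/(R+1)², F₁ = R S/(1+R+S)³, and define w₁ = −R S W² + W·(1 + 4S + 3RS² + 5S² + R² + 2R + 2S³ + 3R²S + 7RS) + (R+1)²·(R + 2S + 1 + S²) and w₂ = R²S²W² − 2WRS·(2R²S + 6RS + 2S³ + 3RS² + 5S² + R² + 2R + 4S + 1) + (R+1)²·(R + 2S + 1 + S²)². Then for every s ∈ ℂ with s² = w₂, the number w := ( w₁ + (R − W + 1)·s ) / ( 2(S+1)²·(SW + (R+1)²) ) satisfies the quadratic equation Y(1−w)(X − w F₁)W = w F₁·(−XYW² + XYW − XW + 1 − w + X). -/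
set_option maxHeartbeats 1600000

/-- Closed-form solution of the Brown–Tutte quadratic equation for rooted
non-separable planar maps, via the algebraic parametrization `R`, `S`. -/
theorem stmt_9 (R S W : ℂ)
    (hS1 : S + 1 ≠ 0) (hR1 : R + 1 ≠ 0) (hRS1 : 1 + R + S ≠ 0)
    (hden : S * W + (R + 1) ^ 2 ≠ 0)
    (X Y F₁ w₁ w₂ : ℂ)
    (hX : X = R / (S + 1) ^ 2)
    (hY : Y = S / (R + 1) ^ 2)
    (hF₁ : F₁ = R * S / (1 + R + S) ^ 3)
    (hw₁ : w₁ = -(R * S * W ^ 2)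
      + W * (1 + 4 * S + 3 * R * S ^ 2 + 5 * S ^ 2 + R ^ 2 + 2 * R + 2 * S ^ 3
          + 3 * R ^ 2 * S + 7 * R * S)
      + (R + 1) ^ 2 * (R + 2 * S + 1 + S ^ 2))
    (hw₂ : w₂ = R ^ 2 * S ^ 2 * W ^ 2
      - 2 * W * R * S * (2 * R ^ 2 * S + 6 * R * S + 2 * S ^ 3 + 3 * R * S ^ 2
          + 5 * S ^ 2 + R ^ 2 + 2 * R + 4 * S + 1)
      + (R + 1) ^ 2 * (R + 2 * S + 1 + S ^ 2) ^ 2) :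
    ∀ s : ℂ, s ^ 2 = w₂ →
      ∀ w : ℂ, w = (w₁ + (R - W + 1) * s) / (2 * (S + 1) ^ 2 * (S * W + (R + 1) ^ 2)) →
        Y * (1 - w) * (X - w * F₁) * W
          = w * F₁ * (-(X * Y * W ^ 2) + X * Y * W - X * W + 1 - w + X) := by
  intro s hs w hw
  rcases eq_or_ne R 0 with hR0 | hR0
  · subst hR0
    rw [hX, hF₁]
    simp
  rcases eq_or_ne S 0 with hS0 | hS0
  · subst hS0
    rw [hY, hF₁]
    simp
  obtain ⟨a, ha⟩ : ∃ x : ℂ, x = F₁ * (Y * W + 1) := ⟨_, rfl⟩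
  obtain ⟨b, hb⟩ : ∃ x : ℂ,
      x = -(Y * W * (F₁ + X) + F₁ * (-(X * Y * W ^ 2) + X * Y * W - X * W + 1 + X)) := ⟨_, rfl⟩
  obtain ⟨c, hc⟩ : ∃ x : ℂ, x = X * Y * W := ⟨_, rfl⟩
  obtain ⟨D, hD⟩ : ∃ x : ℂ, x = 2 * (S + 1) ^ 2 * (S * W + (R + 1) ^ 2) := ⟨_, rfl⟩
  obtain ⟨k, hk⟩ : ∃ x : ℂ, x = R - W + 1 := ⟨_, rfl⟩
  have ht' : ((1 : ℂ) + R + S) ^ 3 ≠ 0 := pow_ne_zero _ hRS1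
  have hp' : ((R : ℂ) + 1) ^ 2 ≠ 0 := pow_ne_zero _ hR1
  have hq' : ((S : ℂ) + 1) ^ 2 ≠ 0 := pow_ne_zero _ hS1
  -- closed forms of the quadratic coefficients via the parametrization
  have ha' : a = R * S * (S * W + (R + 1) ^ 2) / ((1 + R + S) ^ 3 * (R + 1) ^ 2) := by
    rw [ha, hF₁, hY]
    field_simp
    try ring
  have aux1 : ∀ t p q R S W : ℂ, t ≠ 0 → p ≠ 0 → q ≠ 0 →
      S / p * W * (R * S / t + R / q) = S * W * R * (S * q + t) / (t * (q * p)) := by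
    intro t p q R S W ht hp hq
    field_simp
    try ring
  have aux2 : ∀ p q R S W : ℂ, p ≠ 0 → q ≠ 0 →
      -(R / q * (S / p) * W ^ 2) + R / q * (S / p) * W - R / q * W + 1 + R / q
        = (-(R * S * W ^ 2) + R * S * W - R * W * p + p * q + R * p) / (q * p) := by
    intro p q R S W hp hq
    ring_nf
    field_simp
    try ring
  have hb' : b = -(R * S * w₁) / ((1 + R + S) ^ 3 * ((S + 1) ^ 2 * (R + 1) ^ 2)) := by
    rw [hb, hX, hY, hF₁]
    rw [aux1 ((1 + R + S) ^ 3) ((R + 1) ^ 2) ((S + 1) ^ 2) R S W ht' hp' hq']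
    rw [aux2 ((R + 1) ^ 2) ((S + 1) ^ 2) R S W hp' hq']
    rw [div_mul_div_comm, ← add_div, ← neg_div]
    rw [hw₁]
    congr 1
    ring
  have hc' : c = R * S * W / ((S + 1) ^ 2 * (R + 1) ^ 2) := by
    rw [hc, hX, hY]
    field_simp
    try ring
  have hdisc : k ^ 2 * w₂
      = w₁ ^ 2 - 4 * W * (S * W + (R + 1) ^ 2) * (1 + R + S) ^ 3 * (S + 1) ^ 2 := by
    rw [hk, hw₁, hw₂]; ring
  have hDne : D ≠ 0 := by
    rw [hD]
    exact mul_ne_zero (mul_ne_zero two_ne_zero (pow_ne_zero _ hS1)) hden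
  have hane : a ≠ 0 := by
    rw [ha']
    exact div_ne_zero (mul_ne_zero (mul_ne_zero hR0 hS0) hden)
      (mul_ne_zero (pow_ne_zero _ hRS1) (pow_ne_zero _ hR1))
  have hw' : w * D = w₁ + k * s := by
    rw [hw, hD, hk]
    field_simp
    exact mul_div_cancel_right₀ _ (by rw [mul_comm W S]; exact hden)
  have h1 : 2 * a * w₁ + b * D = 0 := by
    rw [ha', hb', hD]
    field_simp
    try ring
  -- abstract form of the discriminant computation, to keep `ring` small
  have haux : ∀ t p q e r u v : ℂ, t ≠ 0 → p ≠ 0 → q ≠ 0 →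
      ((-(r * u) / (t * (q * p))) ^ 2 - 4 * (r * e / (t * p)) * (r * v / (q * p)))
          * (2 * q * e) ^ 2
        = 4 * r ^ 2 * e ^ 2 / (t ^ 2 * p ^ 2) * (u ^ 2 - 4 * v * e * t * q) := by
    intro t p q e r u v ht hp hq
    field_simp
    try ring
  have hL : 4 * a ^ 2 * k ^ 2 * w₂
      = 4 * (R * S) ^ 2 * (S * W + (R + 1) ^ 2) ^ 2
          / (((1 + R + S) ^ 3) ^ 2 * ((R + 1) ^ 2) ^ 2) * (k ^ 2 * w₂) := by
    rw [ha']
    field_simp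
    try ring
  have hR' : (b ^ 2 - 4 * a * c) * D ^ 2
      = 4 * (R * S) ^ 2 * (S * W + (R + 1) ^ 2) ^ 2
          / (((1 + R + S) ^ 3) ^ 2 * ((R + 1) ^ 2) ^ 2)
          * (w₁ ^ 2 - 4 * W * (S * W + (R + 1) ^ 2) * (1 + R + S) ^ 3 * (S + 1) ^ 2) := by
    rw [hb', ha', hc', hD]
    exact haux ((1 + R + S) ^ 3) ((R + 1) ^ 2) ((S + 1) ^ 2) (S * W + (R + 1) ^ 2)
      (R * S) w₁ W ht' hp' hq'
  have h2 : 4 * a ^ 2 * k ^ 2 * w₂ = (b ^ 2 - 4 * a * c) * D ^ 2 := by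
    rw [hL, hR', hdisc]
  have key : 4 * a * D ^ 2 * (a * w ^ 2 + b * w + c) = 0 := by
    linear_combination (4 * a ^ 2 * (w * D + w₁ + k * s) + 4 * a * b * D) * hw'
      + (4 * a ^ 2 * k ^ 2) * hs
      + (2 * a * w₁ + b * D + 4 * a * k * s) * h1 + h2
  have hquad : a * w ^ 2 + b * w + c = 0 := by
    have h4 : (4 : ℂ) * a * D ^ 2 ≠ 0 :=
      mul_ne_zero (mul_ne_zero (by norm_num) hane) (pow_ne_zero _ hDne)
    exact (mul_eq_zero.mp key).resolve_left h4
  rw [ha, hb, hc] at hquad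
  linear_combination hquad
end

section
/- For every real z > 0, set ũ = −1/3 + √(4/9 + 1/(3z)) and r = ũ / ( z·(1 + z(1+ũ)²)² ). Then 3zũ² + 2zũ − z − 1 = 0, and consequently, with Φ(x,u) = u − x z (1 + z(1+u)²)², both Φ(r, ũ) = 0 and ∂Φ/∂u (r, ũ) = 0 hold; explicitly, 4 r z² (1+ũ)(1 + z(1+ũ)²) = 1. -/
/-- For fixed `z > 0`, the explicit point `(r, ũ)` is the solution of the
characteristic system for the algebraic function `u(x,z)` arising in the
enumeration of 3-connected planar graphs. -/
theorem stmt_10 (z : ℝ) (hz : 0 < z)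
    (u r : ℝ)
    (hu : u = -1/3 + Real.sqrt (4/9 + 1/(3*z)))
    (hr : r = u / (z * (1 + z * (1 + u)^2)^2))
    (Φ : ℝ → ℝ → ℝ)
    (hΦ : ∀ x u', Φ x u' = u' - x * z * (1 + z * (1 + u')^2)^2) :
    3 * z * u^2 + 2 * z * u - z - 1 = 0 ∧
    Φ r u = 0 ∧
    deriv (fun u' => Φ r u') u = 0 ∧
    4 * r * z^2 * (1 + u) * (1 + z * (1 + u)^2) = 1 := by
  have hz' : z ≠ 0 := ne_of_gt hz
  have harg : (0:ℝ) ≤ 4/9 + 1/(3*z) := by positivity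
  have hs : Real.sqrt (4/9 + 1/(3*z)) ^ 2 = 4/9 + 1/(3*z) := Real.sq_sqrt harg
  have h1 : 3 * z * u^2 + 2 * z * u - z - 1 = 0 := by
    have hus : u + 1/3 = Real.sqrt (4/9 + 1/(3*z)) := by rw [hu]; ring
    have h2 : (u + 1/3)^2 = 4/9 + 1/(3*z) := by rw [hus, hs]
    field_simp at h2
    nlinarith [h2]
  have hD : 0 < 1 + z * (1 + u)^2 := by positivity
  have hDen : z * (1 + z * (1 + u)^2)^2 ≠ 0 := by positivity
  have hru : r * (z * (1 + z * (1 + u)^2)^2) = u := by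
    rw [hr]; field_simp
  have hΦ0 : Φ r u = 0 := by
    rw [hΦ]; nlinarith [hru]
  have hkey : 4 * r * z^2 * (1 + u) * (1 + z * (1 + u)^2) = 1 := by
    have h2 : (4 * r * z^2 * (1 + u) * (1 + z * (1 + u)^2)) * (1 + z * (1 + u)^2)
        = 1 * (1 + z * (1 + u)^2) := by nlinarith [hru, h1]
    exact mul_right_cancel₀ hD.ne' h2
  refine ⟨h1, hΦ0, ?_, hkey⟩
  have h0 : HasDerivAt (fun u' : ℝ => 1 + u') 1 u := (hasDerivAt_id u).const_add 1
  have ha : HasDerivAt (fun u' : ℝ => (1 + u')^2) ((2:ℕ) * (1 + u)^(2-1) * 1) u := h0.pow 2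
  have hb := (ha.const_mul z).const_add 1
  have hc := hb.pow 2
  have hd := hc.const_mul (r * z)
  have he := (hasDerivAt_id u).sub hd
  have hf : (fun u' : ℝ => u' - r * z * (1 + z * (1 + u')^2)^2)
      = fun u' => Φ r u' := by
    funext u'; rw [hΦ]
  have he' : HasDerivAt (fun u' : ℝ => u' - r * z * (1 + z * (1 + u')^2)^2)
      (1 - r * z * ((2:ℕ) * (1 + z * (1 + u)^2)^(2-1) * (z * ((2:ℕ) * (1 + u)^(2-1) * 1)))) u := he
  rw [← hf, he'.deriv]
  push_cast
  nlinarith [hkey]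
end

section
/- Let u > 1/3 be real and set v = (1+u)/(3u−1), z = v/(1+u)², and x = u/(z(1+v)²). Then v = z(1+u)² and u = xz(1+v)² (so (x,z,u,v) satisfies the defining system), the branch-point condition (1+u)(1+v) = 4uv holds, equivalently 4 x z² (1+u)(1 + z(1+u)²) = 1, and moreover x = (1+u)(3u−1)³/(16u). -/
/-- For `u > 1/3`, the explicit parametrization of the branch point of the
algebraic system `u = xz(1+v)²`, `v = z(1+u)²` used in the enumeration of
3-connected planar graphs. -/
theorem stmt_11 (u : ℝ) (hu : 1/3 < u)
    (v z x : ℝ)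
    (hv : v = (1 + u) / (3 * u - 1))
    (hz : z = v / (1 + u)^2)
    (hx : x = u / (z * (1 + v)^2)) :
    v = z * (1 + u)^2 ∧
    u = x * z * (1 + v)^2 ∧
    (1 + u) * (1 + v) = 4 * u * v ∧
    4 * x * z^2 * (1 + u) * (1 + z * (1 + u)^2) = 1 ∧
    x = (1 + u) * (3 * u - 1)^3 / (16 * u) := by
  have h3 : (0:ℝ) < 3 * u - 1 := by linarith
  have hu0 : (0:ℝ) < u := by linarith
  have h1u : (0:ℝ) < 1 + u := by linarith
  have hvpos : 0 < v := by rw [hv]; positivity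
  have hzpos : 0 < z := by rw [hz]; positivity
  have h1v : (0:ℝ) < 1 + v := by linarith
  have hzne : z ≠ 0 := ne_of_gt hzpos
  have h1une : (1 + u) ≠ 0 := ne_of_gt h1u
  have h1vne : (1 + v) ≠ 0 := ne_of_gt h1v
  have h3ne : (3 * u - 1) ≠ 0 := ne_of_gt h3
  have hune : u ≠ 0 := ne_of_gt hu0
  have hv' : v = z * (1 + u)^2 := by
    rw [hz]; field_simp
  have hvv : v * (3 * u - 1) = 1 + u := by
    rw [hv]; exact div_mul_cancel₀ _ h3ne
  have h34 : (1 + u) * (1 + v) = 4 * u * v := by nlinarith [hvv]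
  refine ⟨hv', ?_, ?_, ?_, ?_⟩
  · rw [hx]; field_simp
  · exact h34
  · have hkey : 4 * u * z * (1 + u) = 1 + v := by
      have h2 : 4 * u * z * (1 + u) * (1 + u) = (1 + v) * (1 + u) := by
        linear_combination (-4*u) * hv' - h34
      exact mul_right_cancel₀ h1une h2
    rw [hx, ← hv']
    field_simp
    exact hkey
  · rw [hx, hz, hv]
    have : u * 3 - 1 ≠ 0 := by linarith
    field_simp
    ring_nf
    field_simp
end

section
/- Define w₂(u,v,w) = u²v²w² − 2wuv·(2u²v + 6uv + 2v³ + 3uv² + 5v² + u² + 2u + 4v + 1) + (u+1)²·(u + (v+1)²)². Then: (i) w₂(u,v,1) = (1 + 2u + u² + 2v + v² + uv − uv²)²; (ii) ∂w₂/∂w = −2uv·( (6−w)uv + 1 + 2u + u² + 4v + 5v² + 2v³ + 3uv² + 2u²v ); (iii) for all real u > 0, v > 0 and w ∈ [0,1], one has w₂(u,v,w) ≥ w₂(u,v,1) = (1+2u+u²+2v+v²+uv−uv²)² ≥ 0, with strict inequality w₂(u,v,w) > 0 for all w ∈ [0,1). -/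
/-- Properties of the polynomial `w₂(u,v,w)` appearing under the square root in
the generating function of edge-rooted 3-connected planar graphs: its value at
`w = 1`, its `w`-derivative, and its positivity for `w ∈ [0,1]`. -/
theorem stmt_12 (w₂ : ℝ → ℝ → ℝ → ℝ)
    (hw₂ : ∀ u v w, w₂ u v w = u^2 * v^2 * w^2
      - 2 * w * u * v * (2 * u^2 * v + 6 * u * v + 2 * v^3 + 3 * u * v^2
          + 5 * v^2 + u^2 + 2 * u + 4 * v + 1)
      + (u + 1)^2 * (u + (v + 1)^2)^2) :
    (∀ u v : ℝ, w₂ u v 1 = (1 + 2*u + u^2 + 2*v + v^2 + u*v - u*v^2)^2) ∧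
    (∀ u v w : ℝ, deriv (fun w' => w₂ u v w') w
      = -(2 * u * v) * ((6 - w) * u * v + 1 + 2*u + u^2 + 4*v + 5*v^2 + 2*v^3
          + 3*u*v^2 + 2*u^2*v)) ∧
    (∀ u v w : ℝ, 0 < u → 0 < v → w ∈ Set.Icc (0:ℝ) 1 →
      w₂ u v w ≥ w₂ u v 1 ∧ w₂ u v 1 = (1 + 2*u + u^2 + 2*v + v^2 + u*v - u*v^2)^2 ∧
      0 ≤ w₂ u v 1) ∧
    (∀ u v w : ℝ, 0 < u → 0 < v → w ∈ Set.Ico (0:ℝ) 1 → 0 < w₂ u v w) := by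
  have h1 : ∀ u v : ℝ, w₂ u v 1 = (1 + 2*u + u^2 + 2*v + v^2 + u*v - u*v^2)^2 := by
    intro u v; rw [hw₂]; ring
  have hfact : ∀ u v w : ℝ, 0 < u → 0 < v → w ≤ 1 →
      w₂ u v w - w₂ u v 1 = (1 - w) * (2 * u * v *
        (2 * u^2 * v + 6 * u * v + 2 * v^3 + 3 * u * v^2
          + 5 * v^2 + u^2 + 2 * u + 4 * v + 1) - u^2 * v^2 * (w + 1)) := by
    intro u v w hu hv hw; rw [hw₂, hw₂]; ring
  have hpos : ∀ u v w : ℝ, 0 < u → 0 < v → w ≤ 1 →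
      0 < 2 * u * v * (2 * u^2 * v + 6 * u * v + 2 * v^3 + 3 * u * v^2
          + 5 * v^2 + u^2 + 2 * u + 4 * v + 1) - u^2 * v^2 * (w + 1) := by
    intro u v w hu hv hw
    have huv : 0 < u * v := mul_pos hu hv
    have hQ : 6 * u * v ≤ 2 * u^2 * v + 6 * u * v + 2 * v^3 + 3 * u * v^2
          + 5 * v^2 + u^2 + 2 * u + 4 * v + 1 := by
      have : (0:ℝ) < 2 * u^2 * v + 2 * v^3 + 3 * u * v^2 + 5 * v^2 + u^2
          + 2 * u + 4 * v + 1 := by positivity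
      linarith
    nlinarith [mul_le_mul_of_nonneg_left hQ (by positivity : (0:ℝ) ≤ 2 * u * v),
      mul_pos huv huv]
  refine ⟨h1, ?_, ?_, ?_⟩
  · intro u v w
    have heq : (fun w' => w₂ u v w') = fun w' : ℝ =>
        u^2 * v^2 * w'^2
        - 2 * w' * (u * v * (2 * u^2 * v + 6 * u * v + 2 * v^3 + 3 * u * v^2
            + 5 * v^2 + u^2 + 2 * u + 4 * v + 1))
        + (u + 1)^2 * (u + (v + 1)^2)^2 := by
      funext w'; rw [hw₂]; ring
    rw [heq]
    set P : ℝ := u * v * (2 * u^2 * v + 6 * u * v + 2 * v^3 + 3 * u * v^2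
            + 5 * v^2 + u^2 + 2 * u + 4 * v + 1) with hP
    have hd : HasDerivAt (fun w' : ℝ =>
        u^2 * v^2 * w'^2 - 2 * w' * P + (u + 1)^2 * (u + (v + 1)^2)^2)
        (u^2 * v^2 * (2 * w) - 2 * P) w := by
      have ha : HasDerivAt (fun w' : ℝ => u^2 * v^2 * w'^2) (u^2 * v^2 * (2 * w)) w := by
        simpa using (hasDerivAt_pow 2 w).const_mul (u^2 * v^2)
      have hb : HasDerivAt (fun w' : ℝ => 2 * w' * P) (2 * P) w := by
        simpa [mul_comm, mul_assoc] using ((hasDerivAt_id w).const_mul 2).mul_const P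
      simpa using (ha.sub hb).add_const ((u + 1)^2 * (u + (v + 1)^2)^2)
    rw [hd.deriv, hP]; ring
  · intro u v w hu hv hw
    obtain ⟨hw0, hw1⟩ := hw
    refine ⟨?_, h1 u v, by rw [h1]; positivity⟩
    have := hfact u v w hu hv hw1
    have h2 := hpos u v w hu hv hw1
    nlinarith [mul_nonneg (sub_nonneg.2 hw1) h2.le]
  · intro u v w hu hv hw
    obtain ⟨hw0, hw1⟩ := hw
    have hd := hfact u v w hu hv hw1.le
    have h2 := hpos u v w hu hv hw1.le
    have h0 : 0 ≤ w₂ u v 1 := by rw [h1]; positivity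
    nlinarith [mul_pos (sub_pos.2 hw1) h2]
end

section
/- Let x, y, α ∈ ℂ with x ≠ 0. Let V ⊂ ℂ be a disc centred at 0 and T : V → ℂ analytic with T(0) = T'(0) = 0, and set G(s) = ∫₀^s T(t)/t dt (analytic on V, integrating along the segment from 0 to s). Let U ⊂ ℂ be a disc centred at 0 and D : U → ℂ analytic with D(0) = 0, D(w) ≠ 0 for w ∈ U \ {0}, D(U) ⊆ V, 1 + yw ≠ 0 and 1 + D(w) ≠ 0 on U, satisfying 1 + D(w) = (1 + yw)·exp( α·D(w) + T(D(w)) / (x²·D(w)) ) for all w ∈ U \ {0}. Let B : U → ℂ be analytic with B(0) = 0 and B'(w) = x y (1 + D(w))/(1 + yw) on U. Then for all w ∈ U \ {0}: B(w) = x·( D(w) − α·D(w)·(1 + D(w)/2) ) − ((1 + D(w))/(x·D(w)))·T(D(w)) + (1/x)·G(D(w)), and the right-hand side extends analytically to w = 0 with value 0. -/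
open Metric Filter Complex

private lemma exists_Q_aux {rV : ℝ} (hrV : 0 < rV) {T : ℂ → ℂ}
    (hTa : AnalyticOnNhd ℂ T (Metric.ball 0 rV)) (hT0 : T 0 = 0) :
    ∃ Q : ℂ → ℂ, AnalyticOnNhd ℂ Q (Metric.ball 0 rV) ∧ Q 0 = deriv T 0 ∧
      ∀ s : ℂ, s ≠ 0 → Q s = T s / s := by
  have hQs : ∀ s : ℂ, s ≠ 0 → dslope T 0 s = T s / s := by
    intro s hs
    rw [dslope_of_ne _ hs, slope_def_field, hT0, sub_zero, sub_zero]
  refine ⟨dslope T 0, ?_, dslope_same T 0, hQs⟩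
  intro s hs
  rcases eq_or_ne s 0 with rfl | hs0
  · obtain ⟨p, hp⟩ := hTa 0 (Metric.mem_ball_self hrV)
    exact hp.has_fpower_series_dslope_fslope.analyticAt
  · have h1 : AnalyticAt ℂ (fun z => T z / z) s := (hTa s hs).div analyticAt_id hs0
    apply h1.congr
    filter_upwards [eventually_ne_nhds hs0] with z hz
    exact (hQs z hz).symm

/-- Closed-form integration for the root-degree generating function of rooted
2-connected planar graphs, with the 3-connected contribution `T` and its
primitive `G(s) = ∫₀^s T(t)/t dt`. -/
theorem stmt_13 (x y α : ℂ) (hx : x ≠ 0)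
    (rV : ℝ) (hrV : 0 < rV)
    (T G : ℂ → ℂ)
    (hTa : AnalyticOnNhd ℂ T (Metric.ball (0 : ℂ) rV))
    (hT0 : T 0 = 0) (hT'0 : deriv T 0 = 0)
    (hGa : AnalyticOnNhd ℂ G (Metric.ball (0 : ℂ) rV))
    (hG0 : G 0 = 0)
    (hG' : ∀ s ∈ Metric.ball (0 : ℂ) rV, s ≠ 0 → deriv G s = T s / s)
    (rU : ℝ) (hrU : 0 < rU)
    (D B : ℂ → ℂ)
    (hDa : AnalyticOnNhd ℂ D (Metric.ball (0 : ℂ) rU)) (hD0 : D 0 = 0)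
    (hDne : ∀ w ∈ Metric.ball (0 : ℂ) rU, w ≠ 0 → D w ≠ 0)
    (hDmaps : Set.MapsTo D (Metric.ball (0 : ℂ) rU) (Metric.ball (0 : ℂ) rV))
    (hyne : ∀ w ∈ Metric.ball (0 : ℂ) rU, 1 + y * w ≠ 0)
    (hDne1 : ∀ w ∈ Metric.ball (0 : ℂ) rU, 1 + D w ≠ 0)
    (heq : ∀ w ∈ Metric.ball (0 : ℂ) rU, w ≠ 0 →
      1 + D w = (1 + y * w) * Complex.exp (α * D w + T (D w) / (x ^ 2 * D w)))
    (hBa : AnalyticOnNhd ℂ B (Metric.ball (0 : ℂ) rU)) (hB0 : B 0 = 0)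
    (hB' : ∀ w ∈ Metric.ball (0 : ℂ) rU, deriv B w = x * y * (1 + D w) / (1 + y * w)) :
    (∀ w ∈ Metric.ball (0 : ℂ) rU, w ≠ 0 →
      B w = x * (D w - α * D w * (1 + D w / 2))
        - (1 + D w) / (x * D w) * T (D w) + 1 / x * G (D w)) ∧
    (∃ Φ : ℂ → ℂ, AnalyticOnNhd ℂ Φ (Metric.ball (0 : ℂ) rU) ∧ Φ 0 = 0 ∧
      ∀ w ∈ Metric.ball (0 : ℂ) rU, w ≠ 0 →
        Φ w = x * (D w - α * D w * (1 + D w / 2))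
          - (1 + D w) / (x * D w) * T (D w) + 1 / x * G (D w)) := by
  have h0U : (0:ℂ) ∈ Metric.ball (0:ℂ) rU := Metric.mem_ball_self hrU
  have h0V : (0:ℂ) ∈ Metric.ball (0:ℂ) rV := Metric.mem_ball_self hrV
  obtain ⟨Q, hQa, hQ0', hQs⟩ := exists_Q_aux hrV hTa hT0
  have hQ0 : Q 0 = 0 := by rw [hQ0', hT'0]
  -- T s = s * Q s on the ball
  have hTQ : ∀ s ∈ Metric.ball (0:ℂ) rV, T s = s * Q s := by
    intro s _
    rcases eq_or_ne s 0 with rfl | hs0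
    · simp [hT0]
    · rw [hQs s hs0]; field_simp
  -- definition of H
  set H : ℂ → ℂ := fun s => x * (s - α * s * (1 + s / 2)) - 1/x * (Q s + T s) + 1/x * G s
    with hHdef
  have hHa : AnalyticOnNhd ℂ H (Metric.ball (0:ℂ) rV) := by
    intro s hs
    have h1 := hQa s hs; have h2 := hTa s hs; have h3 := hGa s hs
    have hpoly : AnalyticAt ℂ (fun s : ℂ => x * (s - α * s * (1 + s / 2))) s := by
      apply analyticAt_const.mul
      exact analyticAt_id.sub (((analyticAt_const.mul analyticAt_id)).mul
        (analyticAt_const.add (analyticAt_id.div analyticAt_const two_ne_zero)))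
    exact (hpoly.sub (analyticAt_const.mul (h1.add h2))).add (analyticAt_const.mul h3)
  have hH0 : H 0 = 0 := by simp [hHdef, hQ0, hT0, hG0]
  -- derivative of H
  have hHd : ∀ s ∈ Metric.ball (0:ℂ) rV, HasDerivAt H
      (x * (1 - (α * (1 + s / 2) + α * s * (1/2))) - 1/x * (deriv Q s + deriv T s)
        + 1/x * deriv G s) s := by
    intro s hs
    have hQd := (hQa s hs).differentiableAt.hasDerivAt
    have hTd := (hTa s hs).differentiableAt.hasDerivAt
    have hGd := (hGa s hs).differentiableAt.hasDerivAt
    have h1 : HasDerivAt (fun s : ℂ => x * (s - α * s * (1 + s / 2)))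
        (x * (1 - (α * (1 + s / 2) + α * s * (1/2)))) s := by
      have ha : HasDerivAt (fun s : ℂ => α * s) α s := by
        simpa using (hasDerivAt_id s).const_mul α
      have hb : HasDerivAt (fun s : ℂ => 1 + s / 2) ((1:ℂ)/2) s := by
        simpa using ((hasDerivAt_id s).div_const 2).const_add 1
      have hab := ha.mul hb
      have := ((hasDerivAt_id s).sub hab).const_mul x
      simpa using this
    exact (h1.sub ((hQd.add hTd).const_mul (1/x))).add (hGd.const_mul (1/x))
  -- Φ
  set Φ : ℂ → ℂ := fun w => H (D w) with hΦdef
  have hΦa : AnalyticOnNhd ℂ Φ (Metric.ball (0:ℂ) rU) :=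
    fun w hw => (hHa (D w) (hDmaps hw)).comp (hDa w hw)
  have hΦ0 : Φ 0 = 0 := by simp [hΦdef, hD0, hH0]
  have hΦd : ∀ w ∈ Metric.ball (0:ℂ) rU, HasDerivAt Φ
      ((x * (1 - (α * (1 + D w / 2) + α * D w * (1/2)))
        - 1/x * (deriv Q (D w) + deriv T (D w)) + 1/x * deriv G (D w)) * deriv D w) w := by
    intro w hw
    exact (hHd (D w) (hDmaps hw)).comp w (hDa w hw).differentiableAt.hasDerivAt
  -- Φ agrees with the formula away from 0
  have hΦformula : ∀ w ∈ Metric.ball (0:ℂ) rU, w ≠ 0 →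
      Φ w = x * (D w - α * D w * (1 + D w / 2))
        - (1 + D w) / (x * D w) * T (D w) + 1 / x * G (D w) := by
    intro w hw hw0
    have hd0 : D w ≠ 0 := hDne w hw hw0
    have hq : Q (D w) = T (D w) / D w := hQs _ hd0
    have key : (1:ℂ)/x * (T (D w)/(D w) + T (D w)) = (1 + D w)/(x * D w) * T (D w) := by
      field_simp
    simp only [hΦdef, hHdef]
    rw [hq, key]
  -- rewritten functional equation
  have heq' : ∀ w ∈ Metric.ball (0:ℂ) rU, w ≠ 0 →
      1 + D w = (1 + y * w) * Complex.exp (α * D w + Q (D w) / x ^ 2) := by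
    intro w hw hw0
    have hd0 : D w ≠ 0 := hDne w hw hw0
    have : T (D w) / (x ^ 2 * D w) = Q (D w) / x ^ 2 := by
      rw [hQs _ hd0, div_div, mul_comm (D w) (x ^ 2)]
    rw [← this]; exact heq w hw hw0
  -- the derivative identity on the punctured ball
  have hderiv_eq : ∀ w ∈ Metric.ball (0:ℂ) rU, w ≠ 0 → deriv B w = deriv Φ w := by
    intro w hw hw0
    have hd : D w ∈ Metric.ball (0:ℂ) rV := hDmaps hw
    have hd0 : D w ≠ 0 := hDne w hw hw0
    have hyw : 1 + y * w ≠ 0 := hyne w hw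
    have hDd := (hDa w hw).differentiableAt.hasDerivAt
    set d := D w
    set D' := deriv D w
    set E := Complex.exp (α * d + Q d / x ^ 2) with hEdef
    -- derivative of R := (1 + y w) exp(ψ)
    have hψ : HasDerivAt (fun w => α * D w + Q (D w) / x ^ 2)
        (α * D' + deriv Q d * D' / x ^ 2) w := by
      have h1 : HasDerivAt (fun w => α * D w) (α * D') w := hDd.const_mul α
      have h2 : HasDerivAt (fun w => Q (D w)) (deriv Q d * D') w := by
        have := ((hQa d hd).differentiableAt.hasDerivAt).comp w hDd
        exact this
      exact h1.add (h2.div_const (x ^ 2))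
    have hlin : HasDerivAt (fun w : ℂ => 1 + y * w) y w := by
      simpa using ((hasDerivAt_id w).const_mul y).const_add 1
    have hR : HasDerivAt (fun w => (1 + y * w) * Complex.exp (α * D w + Q (D w) / x ^ 2))
        (y * E + (1 + y * w) * (E * (α * D' + deriv Q d * D' / x ^ 2))) w :=
      hlin.mul hψ.cexp
    -- 1 + D = R near w, so derivatives agree
    have hSopen : IsOpen (Metric.ball (0:ℂ) rU \ {0}) :=
      Metric.isOpen_ball.sdiff isClosed_singleton
    have hev : (fun w => 1 + D w) =ᶠ[nhds w]
        (fun w => (1 + y * w) * Complex.exp (α * D w + Q (D w) / x ^ 2)) := by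
      filter_upwards [hSopen.mem_nhds ⟨hw, hw0⟩] with z hz
      exact heq' z hz.1 hz.2
    have hkey : D' = y * E + (1 + y * w) * (E * (α * D' + deriv Q d * D' / x ^ 2)) := by
      have e1 := hev.deriv_eq
      rw [hR.deriv, deriv_const_add] at e1
      exact e1
    have hE : 1 + d = (1 + y * w) * E := heq' w hw hw0
    have hyE : y * E = D' - (1 + d) * (α * D' + deriv Q d * D' / x ^ 2) := by
      rw [hE]; linear_combination -hkey
    -- derivatives of T and G at d
    have hTd' : deriv T d = Q d + d * deriv Q d := by
      have hev2 : T =ᶠ[nhds d] (fun s => s * Q s) := by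
        filter_upwards [Metric.isOpen_ball.mem_nhds hd] with z hz
        exact hTQ z hz
      have hmul : HasDerivAt (fun s => s * Q s) (1 * Q d + d * deriv Q d) d :=
        (hasDerivAt_id d).mul (hQa d hd).differentiableAt.hasDerivAt
      rw [hev2.deriv_eq, hmul.deriv]; ring
    have hGd' : deriv G d = Q d := by rw [hG' d hd hd0, hQs d hd0]
    -- put it together
    rw [hB' w hw, (hΦd w hw).deriv, hTd', hGd', hE, mul_div_assoc,
      mul_div_cancel_left₀ _ hyw, mul_assoc, hyE]
    field_simp
    ring
  -- B - Φ has zero derivative on the ball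
  set g : ℂ → ℂ := fun w => B w - Φ w with hgdef
  have hga : AnalyticOnNhd ℂ g (Metric.ball (0:ℂ) rU) :=
    fun w hw => (hBa w hw).sub (hΦa w hw)
  have hgd : ∀ w ∈ Metric.ball (0:ℂ) rU, deriv g w = deriv B w - deriv Φ w := by
    intro w hw
    exact deriv_sub (hBa w hw).differentiableAt (hΦa w hw).differentiableAt
  have hgz : ∀ w ∈ Metric.ball (0:ℂ) rU, w ≠ 0 → deriv g w = 0 := by
    intro w hw hw0
    rw [hgd w hw, hderiv_eq w hw hw0, sub_self]
  have hgz0 : deriv g 0 = 0 := by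
    have hc : ContinuousAt (deriv g) 0 := ((hga.deriv) 0 h0U).continuousAt
    have h1 : Tendsto (deriv g) (nhdsWithin 0 {(0:ℂ)}ᶜ) (nhds (deriv g 0)) :=
      hc.continuousWithinAt.tendsto
    have h2 : Tendsto (deriv g) (nhdsWithin 0 {(0:ℂ)}ᶜ) (nhds 0) := by
      apply Tendsto.congr' _ tendsto_const_nhds
      filter_upwards [inter_mem_nhdsWithin {(0:ℂ)}ᶜ (Metric.isOpen_ball.mem_nhds h0U)]
        with z hz
      exact (hgz z hz.2 hz.1).symm
    exact tendsto_nhds_unique h1 h2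
  have hgz' : ∀ w ∈ Metric.ball (0:ℂ) rU, deriv g w = 0 := by
    intro w hw
    rcases eq_or_ne w 0 with rfl | hw0
    · exact hgz0
    · exact hgz w hw hw0
  -- g is constant on the ball
  have hgconst : ∀ w ∈ Metric.ball (0:ℂ) rU, g w = g 0 := by
    intro w hw
    refine (convex_ball (0:ℂ) rU).is_const_of_fderivWithin_eq_zero
      (fun z hz => ((hga z hz).differentiableAt).differentiableWithinAt) ?_ hw h0U
    intro z hz
    rw [fderivWithin_of_isOpen Metric.isOpen_ball hz]
    have : HasDerivAt g 0 z := by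
      have := (hga z hz).differentiableAt.hasDerivAt
      rwa [hgz' z hz] at this
    have h2 := this.hasFDerivAt.fderiv
    rw [h2]
    refine ContinuousLinearMap.ext fun v => ?_
    simp [ContinuousLinearMap.smulRight_apply]
  have hBΦ : ∀ w ∈ Metric.ball (0:ℂ) rU, B w = Φ w := by
    intro w hw
    have := hgconst w hw
    simp only [hgdef, hB0, hΦ0, sub_zero] at this
    linear_combination this
  refine ⟨?_, ⟨Φ, hΦa, hΦ0, hΦformula⟩⟩
  intro w hw hw0
  rw [hBΦ w hw]
  exact hΦformula w hw hw0
end
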